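/- arXiv:2206.10752 — 3 statements merged into one kernel-verified Lean document; each statement's English description precedes it below -/
import Mathlib

section
/- Let n ≥ 1 and let G be a finite abelian group. Then G is minimally faithful of degree n if and only if there exists a prime p such that G is isomorphic to the elementary abelian p-group of rank n, i.e., G ≅ (ℤ/pℤ)^n (the direct product of n copies of the cyclic group of order p). -/
/-- `rdim G` is the smallest `n` such that `G` has a faithful `n`-dimensional
complex representation, i.e. an injective group homomorphism `G →* GL n ℂ`. -/
noncomputable def rdim (G : Type*) [Group G] : ℕ :=
  sInf {n : ℕ | ∃ ρ : G →* GL (Fin n) ℂ, Function.Injective ρ}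

/-- `G` is minimally faithful of degree `n` if `rdim G = n` and every proper
subgroup has strictly smaller representation dimension. -/
def MinFaithful (G : Type*) [Group G] (n : ℕ) : Prop :=
  rdim G = n ∧ ∀ H : Subgroup G, H ≠ ⊤ → rdim H < n

open Function Polynomial

noncomputable section AuxRdimProof




lemma exists_zmod_addHom_injective {A : Type*} [AddCommGroup A] (q : ℕ) (hq : q ≠ 0)
    (x : A) (hx : ∀ l : ℕ, l • x = 0 ↔ q ∣ l) :
    ∃ g : ZMod q →+ A, Function.Injective g := by
  haveI : NeZero q := ⟨hq⟩
  have h0 : (zmultiplesHom A x) (q : ℤ) = 0 := by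
    simpa [zmultiplesHom_apply, natCast_zsmul] using (hx q).mpr dvd_rfl
  refine ⟨ZMod.lift q ⟨zmultiplesHom A x, h0⟩, ?_⟩
  rw [injective_iff_map_eq_zero]
  intro a ha
  have hval : (((a.val : ℤ) : ZMod q)) = a := by
    push_cast
    exact ZMod.natCast_rightInverse a
  rw [← hval, ZMod.lift_coe] at ha
  have ha' : (a.val : ℕ) • x = 0 := by
    rw [zmultiplesHom_apply] at ha
    rwa [← natCast_zsmul]
  have hdvd : q ∣ a.val := (hx a.val).mp ha'
  have hv : a.val = 0 := Nat.eq_zero_of_dvd_of_lt hdvd (ZMod.val_lt a)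
  exact (ZMod.val_eq_zero a).mp hv

/-- every element of `Multiplicative (ZMod m)` has `m`-th power one -/
lemma mult_zmod_pow (m : ℕ) (x : Multiplicative (ZMod m)) : x ^ m = 1 := by
  apply Multiplicative.toAdd.injective
  simp [toAdd_pow, nsmul_eq_mul, ZMod.natCast_self]

/-- injective character of `ZMod m` into `ℂˣ` -/
lemma exists_char (m : ℕ) (hm : m ≠ 0) :
    ∃ χ : Multiplicative (ZMod m) →* ℂˣ, Function.Injective χ := by
  have hζ := Complex.isPrimitiveRoot_exp m hm
  set ζu : ℂˣ := Units.mk0 _ (Complex.exp_ne_zero (2 * Real.pi * Complex.I / m)) with hζu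
  have key : ∀ l : ℕ, l • (Additive.ofMul ζu) = 0 ↔ m ∣ l := by
    intro l
    rw [← hζ.pow_eq_one_iff_dvd l]
    constructor
    · intro h
      have : ζu ^ l = 1 := by
        have := congrArg Additive.toMul h
        simpa using this
      have := congrArg Units.val this
      simpa [hζu] using this
    · intro h
      have : ζu ^ l = 1 := Units.ext (by simpa [hζu] using h)
      apply Additive.toMul.injective
      simpa using this
  obtain ⟨g, hg⟩ := exists_zmod_addHom_injective m hm (Additive.ofMul ζu) key
  refine ⟨MonoidHom.toAdditiveRight.symm g, ?_⟩
  intro a b hab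
  have : g a.toAdd = g b.toAdd := by
    have h1 := congrArg Additive.ofMul hab
    simpa [MonoidHom.toAdditiveRight] using h1
  exact Multiplicative.toAdd.injective (hg this)







/-- pad an injective hom into `ι → ℂˣ` to one into `Fin d → ℂˣ` along an embedding -/
lemma pad_emb {G : Type*} [Group G] {ι : Type*} [Fintype ι] {d : ℕ}
    (ψ : G →* (ι → ℂˣ)) (hψ : Injective ψ) (ε : ι ↪ Fin d) :
    ∃ φ : G →* (Fin d → ℂˣ), Injective φ := by
  classical
  refine ⟨MonoidHom.mk' (fun g j => ∏ i, if ε i = j then ψ g i else 1) ?_, ?_⟩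
  · intro a b
    funext j
    rw [Pi.mul_apply, ← Finset.prod_mul_distrib]
    refine Finset.prod_congr rfl fun i _ => ?_
    by_cases h : ε i = j <;> simp [h]
  · rw [injective_iff_map_eq_one]
    intro g hg
    apply hψ
    rw [map_one]
    funext i
    have h2 : (∏ i', if ε i' = ε i then ψ g i' else 1) = ψ g i := by
      rw [Finset.prod_eq_single_of_mem i (Finset.mem_univ i)
        (fun b _ hb => if_neg (fun hc => hb (ε.injective hc))), if_pos rfl]
    rw [Pi.one_apply, ← h2]
    simpa using congrFun hg (ε i)

/-- injective map `ZMod q → ZMod (q^t)` as multiplicative hom -/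
lemma exists_psi (q t : ℕ) (hq : q ≠ 0) (ht : t ≠ 0) :
    ∃ ψ : Multiplicative (ZMod q) →* Multiplicative (ZMod (q ^ t)),
      Function.Injective ψ := by
  have key : ∀ l : ℕ, l • ((q ^ (t-1) : ℕ) : ZMod (q ^ t)) = 0 ↔ q ∣ l := by
    intro l
    rw [nsmul_eq_mul, ← Nat.cast_mul, ZMod.natCast_eq_zero_iff]
    have hqt : q ^ t = q * q ^ (t - 1) := by
      conv_lhs => rw [← Nat.succ_pred_eq_of_pos (Nat.pos_of_ne_zero ht)]
      rw [pow_succ, mul_comm]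
      rfl
    rw [hqt, mul_comm q (q ^ (t-1)), mul_comm (l : ℕ) (q ^ (t-1))]
    exact Nat.mul_dvd_mul_iff_left (Nat.pos_of_ne_zero (pow_ne_zero _ hq))
  obtain ⟨g, hg⟩ := exists_zmod_addHom_injective q hq _ key
  refine ⟨AddMonoidHom.toMultiplicative g, ?_⟩
  intro a b hab
  have : g a.toAdd = g b.toAdd := by
    have h1 := congrArg Multiplicative.toAdd hab
    exact h1
  exact Multiplicative.toAdd.injective (hg this)

/-- the diagonal embedding gives a faithful representation -/
lemma exists_faithful_of_emb {G : Type*} [Group G] {d : ℕ}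
    (φ : G →* (Fin d → ℂˣ)) (hφ : Injective φ) :
    ∃ ρ : G →* GL (Fin d) ℂ, Injective ρ := by
  have hmul : ∀ u v : Fin d → ℂˣ,
      Matrix.diagonal (fun i => ((u * v) i : ℂ)) =
        Matrix.diagonal (fun i => (u i : ℂ)) * Matrix.diagonal (fun i => (v i : ℂ)) := by
    intro u v
    rw [Matrix.diagonal_mul_diagonal]
    rfl
  let D : (Fin d → ℂˣ) →* GL (Fin d) ℂ :=
    { toFun := fun u =>
        ⟨Matrix.diagonal (fun i => (u i : ℂ)),
         Matrix.diagonal (fun i => (((u i)⁻¹ : ℂˣ) : ℂ)),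
         by rw [Matrix.diagonal_mul_diagonal]; simp,
         by rw [Matrix.diagonal_mul_diagonal]; simp⟩
      map_one' := Units.ext (by simp)
      map_mul' := fun u v => Units.ext (by simpa using hmul u v) }
  have hD : Injective D := by
    intro u v huv
    have h1 : Matrix.diagonal (fun i => (u i : ℂ)) = Matrix.diagonal (fun i => (v i : ℂ)) :=
      congrArg Units.val huv
    funext i
    have h2 : (u i : ℂ) = v i := by
      have := congrFun (congrFun h1 i) i
      simpa [Matrix.diagonal_apply_eq] using this
    exact Units.ext h2
  exact ⟨D.comp φ, hD.comp hφ⟩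

lemma rdim_le_of_emb {G : Type*} [Group G] {d : ℕ}
    (φ : G →* (Fin d → ℂˣ)) (hφ : Injective φ) : rdim G ≤ d := by
  obtain ⟨ρ, hρ⟩ := exists_faithful_of_emb φ hφ
  exact Nat.sInf_le ⟨ρ, hρ⟩

/-- counting: if all elements satisfy `g ^ p = 1` then an embedding into
`(ℂˣ)^d` bounds the cardinality by `p ^ d`. -/
lemma card_le_of_emb {G : Type*} [Group G] {p d : ℕ} (hp : p ≠ 0)
    (hG : ∀ g : G, g ^ p = 1) {φ : G →* (Fin d → ℂˣ)} (hφ : Injective φ) :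
    Nat.card G ≤ p ^ d := by
  classical
  have hmem : ∀ (g : G) (i : Fin d), ((φ g i : ℂ)) ∈ nthRootsFinset p (1 : ℂ) := by
    intro g i
    rw [Polynomial.mem_nthRootsFinset (Nat.pos_of_ne_zero hp)]
    have h1 : (φ g) ^ p = 1 := by rw [← map_pow, hG, map_one]
    have h2 : (φ g i) ^ p = 1 := by
      have := congrFun h1 i
      simpa using this
    have := congrArg Units.val h2
    simpa using this
  let F : G → (Fin d → nthRootsFinset p (1 : ℂ)) := fun g i => ⟨_, hmem g i⟩
  have hF : Injective F := by
    intro a b hab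
    apply hφ
    funext i
    exact Units.ext (congrArg Subtype.val (congrFun hab i))
  have hcard1 : Nat.card G ≤ Nat.card (Fin d → nthRootsFinset p (1 : ℂ)) :=
    Nat.card_le_card_of_injective F hF
  have hcard2 : Nat.card (Fin d → (nthRootsFinset p (1 : ℂ) : Finset ℂ)) =
      (nthRootsFinset p (1 : ℂ)).card ^ d := by
    rw [Nat.card_pi]
    simp [Nat.card_eq_fintype_card]
  have hle : (nthRootsFinset p (1 : ℂ)).card ≤ p := by
    refine le_trans (Multiset.toFinset_card_le _) ?_
    simpa using Polynomial.card_nthRoots p (1 : ℂ)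
  calc Nat.card G ≤ (nthRootsFinset p (1 : ℂ)).card ^ d := by rw [← hcard2]; exact hcard1
    _ ≤ p ^ d := Nat.pow_le_pow_left hle d

/-- Any faithful `d`-dimensional representation of a finite abelian group yields
an embedding into `(ℂˣ)^d`. -/
lemma exists_emb_of_faithful {G : Type*} [CommGroup G] [Finite G] {d : ℕ}
    (ρ : G →* GL (Fin d) ℂ) (hρ : Injective ρ) :
    ∃ φ : G →* (Fin d → ℂˣ), Injective φ := by
  classical
  set V := (Fin d → ℂ)
  let fM : G →* Module.End ℂ V :=
    { toFun := fun g => Matrix.toLinAlgEquiv' (ρ g : Matrix (Fin d) (Fin d) ℂ)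
      map_one' := by simp
      map_mul' := fun g h => by
        have h1 : ((ρ (g * h) : Matrix (Fin d) (Fin d) ℂ)) =
            (ρ g : Matrix (Fin d) (Fin d) ℂ) * (ρ h : Matrix (Fin d) (Fin d) ℂ) := by
          rw [map_mul]; rfl
        show Matrix.toLinAlgEquiv' _ = Matrix.toLinAlgEquiv' _ * Matrix.toLinAlgEquiv' _
        rw [h1, map_mul] }
  set f : G → Module.End ℂ V := fun g => fM g with hf
  have fmul : ∀ a b : G, f (a * b) = f a * f b := fun a b => fM.map_mul a b
  have fone : f 1 = 1 := fM.map_one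
  have fpow : ∀ (a : G) (k : ℕ), f (a ^ k) = (f a) ^ k := fun a k => map_pow fM a k
  have hcomm : ∀ g h, Commute (f g) (f h) := by
    intro g h
    unfold Commute SemiconjBy
    rw [← fmul, ← fmul, mul_comm]
  have htop : ⨆ χ : G → ℂ, ⨅ g, (f g).maxGenEigenspace (χ g) = ⊤ :=
    Module.End.iSup_iInf_maxGenEigenspace_eq_top_of_iSup_maxGenEigenspace_eq_top_of_commute f
      (fun g h _ => hcomm g h) (fun g => Module.End.iSup_maxGenEigenspace_eq_top (f g))
  have hind : iSupIndep (fun χ : G → ℂ => ⨅ g, (f g).maxGenEigenspace (χ g)) :=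
    Module.End.independent_iInf_maxGenEigenspace_of_forall_mapsTo f
      (fun i j φ => Module.End.mapsTo_maxGenEigenspace_of_comm (hcomm j i) φ)
  have hss : ∀ g μ, (f g).maxGenEigenspace μ = (f g).eigenspace μ := by
    intro g μ
    have hord : orderOf g ≠ 0 := (orderOf_pos g).ne'
    have hsf : (f g).IsSemisimple := by
      apply Module.End.isSemisimple_of_squarefree_aeval_eq_zero
        (p := X ^ (orderOf g) - C 1)
      · exact (Polynomial.separable_X_pow_sub_C (1 : ℂ)
          (by exact_mod_cast Nat.cast_ne_zero.mpr hord) one_ne_zero).squarefree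
      · rw [map_sub, aeval_X_pow, aeval_C]
        have : (f g) ^ (orderOf g) = 1 := by
          rw [← fpow, pow_orderOf_eq_one, fone]
        rw [this]
        simp
    exact hsf.isFinitelySemisimple.maxGenEigenspace_eq_eigenspace μ
  set W : (G → ℂ) → Submodule ℂ V := fun χ => ⨅ g, (f g).maxGenEigenspace (χ g) with hW
  haveI : Fintype {χ : G → ℂ // W χ ≠ ⊥} := hind.fintypeNeBotOfFiniteDimensional
  have hcard : Fintype.card {χ : G → ℂ // W χ ≠ ⊥} ≤ d := by
    have h1 := hind.subtype_ne_bot_le_finrank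
    have h2 : Module.finrank ℂ V = d := by
      rw [show Module.finrank ℂ V = Module.finrank ℂ (Fin d → ℂ) from rfl]
      simp
    rwa [h2] at h1
  -- each χ with W χ ≠ ⊥ gives a character G →* ℂˣ
  have hchar : ∀ χ : {χ : G → ℂ // W χ ≠ ⊥}, ∃ h : G →* ℂˣ, ∀ g, (h g : ℂ) = χ.1 g := by
    rintro ⟨χ, hχ⟩
    obtain ⟨x, hxW, hx0⟩ := Submodule.ne_bot_iff _ |>.mp hχ
    have heig : ∀ g, f g x = χ g • x := by
      intro g
      have hx' : x ∈ (f g).eigenspace (χ g) := by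
        rw [← hss]
        exact (Submodule.mem_iInf _).mp hxW g
      simpa using hx'
    have hmul : ∀ g h, χ (g * h) = χ g * χ h := by
      intro g h
      have h1 : χ (g * h) • x = (χ g * χ h) • x := by
        have h2 : f (g * h) x = (χ g * χ h) • x := by
          rw [fmul]
          have : (f g * f h) x = f g (f h x) := rfl
          rw [this, heig h, map_smul, heig g, smul_smul, mul_comm (χ h) (χ g)]
        rw [← h2, heig (g * h)]
      exact smul_left_injective ℂ hx0 h1
    have hone : χ 1 = 1 := by
      have h1 : χ 1 • x = (1 : ℂ) • x := by
        rw [one_smul, ← heig 1, fone]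
        rfl
      exact smul_left_injective ℂ hx0 h1
    have hne : ∀ g, χ g ≠ 0 := by
      intro g h0
      have := hmul g g⁻¹
      rw [mul_inv_cancel, hone, h0, zero_mul] at this
      exact one_ne_zero this
    exact ⟨MonoidHom.mk' (fun g => Units.mk0 (χ g) (hne g))
      (fun a b => Units.ext (by simp [hmul])), fun g => rfl⟩
  choose hh hval using hchar
  let ψ : G →* ({χ : G → ℂ // W χ ≠ ⊥} → ℂˣ) :=
    MonoidHom.mk' (fun g χ => hh χ g) (fun a b => funext fun χ => by simp)
  have hψ : Injective ψ := by
    rw [injective_iff_map_eq_one]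
    intro g hg
    apply hρ
    rw [map_one]
    have hfg : f g = 1 := by
      have hle : ⊤ ≤ (f g).eigenspace 1 := by
        rw [← htop]
        apply iSup_le
        intro χ
        by_cases hχ : W χ ≠ ⊥
        · have hχg : χ g = 1 := by
            have h1 := congrFun hg ⟨χ, hχ⟩
            have h2 := hval ⟨χ, hχ⟩ g
            rw [show ψ g ⟨χ, hχ⟩ = hh ⟨χ, hχ⟩ g from rfl] at h1
            rw [h1] at h2
            simpa using h2.symm
          calc W χ ≤ (f g).maxGenEigenspace (χ g) := iInf_le _ g
            _ = (f g).eigenspace (χ g) := hss g (χ g)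
            _ = (f g).eigenspace 1 := by rw [hχg]
        · push_neg at hχ
          rw [hχ]
          exact bot_le
      apply LinearMap.ext
      intro v
      have hv : v ∈ (f g).eigenspace 1 := hle Submodule.mem_top
      have := Module.End.mem_eigenspace_iff.mp hv
      simpa using this
    apply Units.ext
    have : (Matrix.toLinAlgEquiv' (ρ g : Matrix (Fin d) (Fin d) ℂ)) = 1 := hfg
    have h2 := Matrix.toLinAlgEquiv'.injective (a₁ := (ρ g : Matrix (Fin d) (Fin d) ℂ)) (a₂ := 1)
      (by rw [this, map_one])
    exact h2
  obtain ⟨ε⟩ := Function.Embedding.nonempty_of_card_le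
    (le_trans hcard (by simp) : Fintype.card {χ : G → ℂ // W χ ≠ ⊥} ≤ Fintype.card (Fin d))
  exact pad_emb ψ hψ ε




/-- all elements of an elementary abelian pi-group have `q`-power one -/
lemma elem_pow_eq_one {ι : Type*} (q : ℕ) (x : ι → Multiplicative (ZMod q)) : x ^ q = 1 := by
  funext i
  exact mult_zmod_pow q (x i)

lemma elem_card {ι : Type*} [Fintype ι] (q : ℕ) :
    Nat.card (ι → Multiplicative (ZMod q)) = q ^ Fintype.card ι := by
  rw [Nat.card_pi]
  have h1 : ∀ i : ι, Nat.card (Multiplicative (ZMod q)) = q := fun _ => by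
    rw [Nat.card_congr Multiplicative.toAdd]
    exact Nat.card_zmod q
  rw [Finset.prod_congr rfl (fun i _ => h1 i), Finset.prod_const, Finset.card_univ]

/-- rank bound: an embedding of an elementary abelian group into `(ℂˣ)^d` forces rank ≤ d -/
lemma rank_le_of_emb {ι : Type*} [Fintype ι] {q d : ℕ} (hq : q.Prime)
    {φ : (ι → Multiplicative (ZMod q)) →* (Fin d → ℂˣ)} (hφ : Injective φ) :
    Fintype.card ι ≤ d := by
  have h1 := card_le_of_emb hq.ne_zero (elem_pow_eq_one q) hφ
  rw [elem_card] at h1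
  exact (Nat.pow_le_pow_iff_right hq.one_lt).mp h1

/-- the coordinatewise character embedding of an elementary abelian group -/
lemma elem_emb {ι : Type*} [Fintype ι] {q : ℕ} (hq : q ≠ 0) :
    ∃ ψ : (ι → Multiplicative (ZMod q)) →* (ι → ℂˣ), Injective ψ := by
  obtain ⟨χ, hχ⟩ := exists_char q hq
  refine ⟨MonoidHom.mk' (fun x i => χ (x i)) (fun a b => funext fun i => by simp), ?_⟩
  intro a b hab
  funext i
  exact hχ (congrFun hab i)

/-- `rdim` of a group isomorphic to an elementary abelian group of rank `m` is `m`. -/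
lemma elem_rdim {G : Type*} [CommGroup G] [Finite G] {ι : Type*} [Fintype ι] {q : ℕ}
    (hq : q.Prime) (E : G ≃* (ι → Multiplicative (ZMod q))) :
    rdim G = Fintype.card ι := by
  obtain ⟨ψ, hψ⟩ := elem_emb (ι := ι) hq.ne_zero
  obtain ⟨φ, hφ⟩ := pad_emb ((ψ.comp E.toMonoidHom))
    (hψ.comp E.injective) (Fintype.equivFin ι).toEmbedding
  have upper : rdim G ≤ Fintype.card ι := rdim_le_of_emb φ hφ
  have hnonempty : {k : ℕ | ∃ ρ : G →* GL (Fin k) ℂ, Function.Injective ρ}.Nonempty :=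
    ⟨Fintype.card ι, exists_faithful_of_emb φ hφ⟩
  obtain ⟨ρ, hρ⟩ := Nat.sInf_mem hnonempty
  obtain ⟨φ', hφ'⟩ := exists_emb_of_faithful ρ hρ
  have lower : Fintype.card ι ≤ rdim G := by
    refine rank_le_of_emb hq (φ := φ'.comp E.symm.toMonoidHom) ?_
    exact hφ'.comp E.symm.injective
  exact le_antisymm upper lower

/-- structure theorem, multiplicative prime-power version -/
lemma struct_mult (G : Type*) [CommGroup G] [Finite G] :
    ∃ (ι : Type) (_ : Fintype ι) (p e : ι → ℕ),
      (∀ i, (p i).Prime) ∧ Nonempty (G ≃* ∀ i, Multiplicative (ZMod (p i ^ e i))) := by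
  obtain ⟨ι, hι, p, hp, e, ⟨F⟩⟩ := AddCommGroup.equiv_directSum_zmod_of_finite (Additive G)
  exact ⟨ι, hι, p, e, hp, ⟨MulEquiv.toAdditive.symm <| F.trans <|
    (DirectSum.addEquivProd _).trans <| MulEquiv.toAdditiveRight <| MulEquiv.piMultiplicative _⟩⟩


/-- choose ranks within fibers of `p` (restricted to `e ≠ 0`) -/
lemma exists_fiber_rank {ι : Type*} [Fintype ι] [DecidableEq ι] (p e : ι → ℕ) (d : ℕ)
    (hd : 1 ≤ d)
    (hm : ∀ i, e i ≠ 0 →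
      (Finset.univ.filter (fun i' => p i' = p i ∧ e i' ≠ 0)).card ≤ d) :
    ∃ r : ι → Fin d, ∀ i j, p i = p j → e i ≠ 0 → e j ≠ 0 → r i = r j → i = j := by
  classical
  let ord : ι → ℕ := fun i => ((Fintype.equivFin ι) i : ℕ)
  have hord : Injective ord := fun a b h =>
    (Fintype.equivFin ι).injective (Fin.val_injective h)
  let A : ι → Finset ι := fun i =>
    Finset.univ.filter (fun i' => p i' = p i ∧ e i' ≠ 0 ∧ ord i' < ord i)
  have hlt : ∀ i, e i ≠ 0 → (A i).card < d := by
    intro i hi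
    have hss : A i ⊂ Finset.univ.filter (fun i' => p i' = p i ∧ e i' ≠ 0) := by
      constructor
      · intro x hx
        simp only [A, Finset.mem_filter] at hx ⊢
        exact ⟨hx.1, hx.2.1, hx.2.2.1⟩
      · intro hsub
        have hmem : i ∈ Finset.univ.filter (fun i' => p i' = p i ∧ e i' ≠ 0) := by
          simp [hi]
        have := hsub hmem
        simp only [A, Finset.mem_filter] at this
        exact absurd this.2.2.2 (lt_irrefl _)
    exact lt_of_lt_of_le (Finset.card_lt_card hss) (hm i hi)
  refine ⟨fun i => if h : e i = 0 then ⟨0, hd⟩ else ⟨(A i).card, hlt i h⟩, ?_⟩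
  intro i j hpij hei hej hrij
  dsimp only at hrij
  rw [dif_neg hei, dif_neg hej] at hrij
  have hcard : (A i).card = (A j).card := congrArg Fin.val hrij
  rcases lt_trichotomy (ord i) (ord j) with h | h | h
  · exfalso
    have hss : A i ⊂ A j := by
      constructor
      · intro x hx
        simp only [A, Finset.mem_filter] at hx ⊢
        exact ⟨hx.1, hx.2.1.trans hpij, hx.2.2.1, hx.2.2.2.trans h⟩
      · intro hsub
        have hmem : i ∈ A j := by simp [A, hpij, hei, h]
        have := hsub hmem
        simp only [A, Finset.mem_filter] at this
        exact absurd this.2.2.2 (lt_irrefl _)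
    exact (Finset.card_lt_card hss).ne hcard
  · exact hord h
  · exfalso
    have hss : A j ⊂ A i := by
      constructor
      · intro x hx
        simp only [A, Finset.mem_filter] at hx ⊢
        exact ⟨hx.1, hx.2.1.trans hpij.symm, hx.2.2.1, hx.2.2.2.trans h⟩
      · intro hsub
        have hmem : j ∈ A i := by simp [A, hpij.symm, hej, h]
        have := hsub hmem
        simp only [A, Finset.mem_filter] at this
        exact absurd this.2.2.2 (lt_irrefl _)
    exact (Finset.card_lt_card hss).ne hcard.symm

/-- The CRT-type embedding: a finite product of cyclic prime-power groups embeds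
into `(ℂˣ)^d` as soon as we have a fiberwise-injective assignment of coordinates. -/
lemma crt_emb {ι : Type*} [Fintype ι] [DecidableEq ι] (p e : ι → ℕ)
    (hp : ∀ i, (p i).Prime) {d : ℕ} (r : ι → Fin d)
    (hr : ∀ i j, p i = p j → e i ≠ 0 → e j ≠ 0 → r i = r j → i = j) :
    ∃ φ : (∀ i, Multiplicative (ZMod (p i ^ e i))) →* (Fin d → ℂˣ),
      Injective φ := by
  have hne : ∀ i, p i ^ e i ≠ 0 := fun i => pow_ne_zero _ (hp i).ne_zero
  choose χ hχ using fun i => exists_char (p i ^ e i) (hne i)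
  refine ⟨MonoidHom.mk' (fun x j => ∏ i, if r i = j then χ i (x i) else 1) ?_, ?_⟩
  · intro a b
    funext j
    rw [Pi.mul_apply, ← Finset.prod_mul_distrib]
    refine Finset.prod_congr rfl fun i _ => ?_
    by_cases h : r i = j <;> simp [h]
  · rw [injective_iff_map_eq_one]
    intro x hx
    funext i₀
    by_cases he₀ : e i₀ = 0
    · have : Subsingleton (Multiplicative (ZMod (p i₀ ^ e i₀))) := by
        rw [he₀, pow_zero]
        infer_instance
      exact Subsingleton.elim _ _
    -- triviality of elements in coordinates with e = 0
    have hzero : ∀ i, e i = 0 → x i = 1 := by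
      intro i hi
      have : Subsingleton (Multiplicative (ZMod (p i ^ e i))) := by
        rw [hi, pow_zero]
        infer_instance
      exact Subsingleton.elim _ _
    have horder : ∀ i, (χ i (x i)) ^ (p i ^ e i) = 1 := by
      intro i
      rw [← map_pow, mult_zmod_pow, map_one]
    have hgj : (∏ i, if r i = r i₀ then χ i (x i) else 1) = 1 := by
      have h1 := congrFun hx (r i₀)
      simpa using h1
    set M := ∏ i ∈ Finset.univ.erase i₀,
      (if r i = r i₀ ∧ e i ≠ 0 then p i ^ e i else 1) with hM
    have hpow : ∀ i ∈ Finset.univ.erase i₀,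
        (if r i = r i₀ then χ i (x i) else 1) ^ M = 1 := by
      intro i hi
      by_cases h : r i = r i₀
      · rw [if_pos h]
        by_cases hei : e i = 0
        · rw [hzero i hei, map_one, one_pow]
        · have hdvd : (p i ^ e i) ∣ M := by
            have h9 := Finset.dvd_prod_of_mem
              (fun i => if r i = r i₀ ∧ e i ≠ 0 then p i ^ e i else 1) hi
            rw [if_pos ⟨h, hei⟩] at h9
            rw [← hM] at h9
            exact h9
          exact orderOf_dvd_iff_pow_eq_one.mp
            (dvd_trans (orderOf_dvd_of_pow_eq_one (horder i)) hdvd)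
      · rw [if_neg h, one_pow]
    have hM1 : (χ i₀ (x i₀)) ^ M = 1 := by
      have h1 : (∏ i, (if r i = r i₀ then χ i (x i) else 1) ^ M) = 1 := by
        rw [Finset.prod_pow, hgj, one_pow]
      rw [Finset.prod_eq_single_of_mem i₀ (Finset.mem_univ i₀)
        (fun i _ hi => hpow i (Finset.mem_erase.mpr ⟨hi, Finset.mem_univ i⟩))] at h1
      simpa using h1
    have hcop : Nat.Coprime (p i₀ ^ e i₀) M := by
      apply Nat.Coprime.pow_left
      rw [Nat.Prime.coprime_iff_not_dvd (hp i₀)]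
      intro hdvd
      obtain ⟨i, hi, hdvd'⟩ :=
        (Nat.Prime.prime (hp i₀)).exists_mem_finset_dvd hdvd
      by_cases h : r i = r i₀ ∧ e i ≠ 0
      · rw [if_pos h] at hdvd'
        have hpi : p i₀ = p i :=
          (Nat.prime_dvd_prime_iff_eq (hp i₀) (hp i)).mp ((hp i₀).dvd_of_dvd_pow hdvd')
        exact (Finset.mem_erase.mp hi).1 (hr i i₀ hpi.symm h.2 he₀ h.1)
      · rw [if_neg h] at hdvd'
        exact absurd (Nat.le_of_dvd one_pos hdvd') (by have := (hp i₀).one_lt; omega)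
    have hdvd1 : orderOf (χ i₀ (x i₀)) ∣ Nat.gcd (p i₀ ^ e i₀) M :=
      Nat.dvd_gcd (orderOf_dvd_of_pow_eq_one (horder i₀)) (orderOf_dvd_of_pow_eq_one hM1)
    rw [Nat.Coprime.gcd_eq_one hcop] at hdvd1
    have h1 : χ i₀ (x i₀) = 1 := orderOf_eq_one_iff.mp (Nat.dvd_one.mp hdvd1)
    exact hχ i₀ (by simp [h1])


/-- cast equivalence between `ZMod` groups -/
def zmodMulCast {a b : ℕ} (h : a = b) :
    Multiplicative (ZMod a) ≃* Multiplicative (ZMod b) := by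
  subst h
  exact MulEquiv.refl _

/-- reindexing pi groups along an equivalence -/
def reindexMulEquiv {M : Type*} [CommGroup M] {ι κ : Type*} (e : ι ≃ κ) :
    (ι → M) ≃* (κ → M) :=
  { Equiv.arrowCongr e (Equiv.refl M) with
    map_mul' := fun x y => rfl }

/-- dropping trivial (subsingleton) factors from a finite product of groups -/
noncomputable def resEquiv {ι : Type*} [Fintype ι] (N : ι → Type*)
    [∀ i, CommGroup (N i)] :
    (∀ i, N i) ≃* (∀ i : {i : ι // Nontrivial (N i)}, N i.1) := by
  classical
  let Φ : (∀ i, N i) →* (∀ i : {i : ι // Nontrivial (N i)}, N i.1) :=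
    { toFun := fun x i => x i.1
      map_one' := rfl
      map_mul' := fun a b => rfl }
  refine MulEquiv.ofBijective Φ ⟨?_, ?_⟩
  · intro a b hab
    funext i
    by_cases h : Nontrivial (N i)
    · exact congrFun hab ⟨i, h⟩
    · rw [not_nontrivial_iff_subsingleton] at h
      exact Subsingleton.elim _ _
  · intro y
    refine ⟨fun i => if h : Nontrivial (N i) then y ⟨i, h⟩ else 1, ?_⟩
    funext i
    show (if h : Nontrivial (N i.1) then y ⟨i.1, h⟩ else 1) = y i
    rw [dif_pos i.2]

/-- Subgroups of elementary abelian groups are elementary abelian of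
strictly smaller rank. -/
lemma subgroup_elem {q n : ℕ} (hq : q.Prime)
    (K : Subgroup (Fin n → Multiplicative (ZMod q))) (hK : K ≠ ⊤) :
    ∃ m : ℕ, m < n ∧ Nonempty (↥K ≃* (Fin m → Multiplicative (ZMod q))) := by
  classical
  haveI : NeZero q := ⟨hq.ne_zero⟩
  have hexp : ∀ k : ↥K, k ^ q = 1 := by
    intro k
    apply Subtype.ext
    rw [SubmonoidClass.coe_pow]
    funext i
    exact mult_zmod_pow q _
  obtain ⟨ι, hι, p', e', hp', ⟨EK⟩⟩ := struct_mult ↥K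
  have hdvd : ∀ i, p' i ^ e' i ∣ q := by
    intro i
    have h1 : p' i ^ e' i =
        orderOf (EK.symm <| Pi.mulSingle i <| Multiplicative.ofAdd 1) := by
      simpa only [MulEquiv.orderOf_eq, orderOf_piMulSingle,
        orderOf_ofAdd_eq_addOrderOf] using (ZMod.addOrderOf_one (p' i ^ e' i)).symm
    rw [h1]
    exact dvd_trans (Monoid.order_dvd_exponent _)
      (Monoid.exponent_dvd_of_forall_pow_eq_one hexp)
  set ι' := {i : ι // Nontrivial (Multiplicative (ZMod (p' i ^ e' i)))}
  have hni : ∀ i : ι', p' i.1 ^ e' i.1 = q := by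
    rintro ⟨i, hi⟩
    refine ((Nat.Prime.eq_one_or_self_of_dvd hq _ (hdvd i)).resolve_left ?_)
    intro h1
    have h2 : Subsingleton (Multiplicative (ZMod (p' i ^ e' i))) := by
      rw [h1]
      infer_instance
    exact (not_subsingleton_iff_nontrivial.mpr hi) h2
  let E2 : ↥K ≃* (∀ i : ι', Multiplicative (ZMod (p' i.1 ^ e' i.1))) :=
    EK.trans (resEquiv _)
  let E3 : (∀ i : ι', Multiplicative (ZMod (p' i.1 ^ e' i.1))) ≃*
      (ι' → Multiplicative (ZMod q)) :=
    MulEquiv.piCongrRight (fun i => zmodMulCast (hni i))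
  set m := Fintype.card ι' with hm
  let E4 : (ι' → Multiplicative (ZMod q)) ≃* (Fin m → Multiplicative (ZMod q)) :=
    reindexMulEquiv (Fintype.equivFin ι')
  let E5 : ↥K ≃* (Fin m → Multiplicative (ZMod q)) := (E2.trans E3).trans E4
  refine ⟨m, ?_, ⟨E5⟩⟩
  have hcardK : Nat.card ↥K = q ^ m := by
    rw [Nat.card_congr E5.toEquiv, elem_card]
    simp
  have hcardP : Nat.card (Fin n → Multiplicative (ZMod q)) = q ^ n := by
    rw [elem_card]
    simp
  have hdvd2 : q ^ m ∣ q ^ n := by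
    rw [← hcardK, ← hcardP]
    exact Subgroup.card_subgroup_dvd_card K
  have hle : m ≤ n := (Nat.pow_dvd_pow_iff_le_right hq.one_lt).mp hdvd2
  rcases lt_or_eq_of_le hle with h | h
  · exact h
  · exfalso
    apply hK
    apply Subgroup.eq_top_of_card_eq
    rw [hcardK, hcardP, h]


theorem stmt_0 (n : ℕ) (hn : 1 ≤ n) (G : Type*) [Group G] [Finite G]
    (hab : ∀ a b : G, a * b = b * a) :
    MinFaithful G n ↔
      ∃ p : ℕ, p.Prime ∧ Nonempty (G ≃* (Fin n → Multiplicative (ZMod p))) := by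
  classical
  letI : CommGroup G := { ‹Group G› with mul_comm := hab }
  constructor
  · rintro ⟨h1, h2⟩
    have hSne : {k : ℕ | ∃ ρ : G →* GL (Fin k) ℂ, Function.Injective ρ}.Nonempty := by
      by_contra hc
      rw [Set.not_nonempty_iff_eq_empty] at hc
      have h0 : rdim G = 0 := by
        unfold rdim
        rw [hc]
        exact Nat.sInf_empty
      omega
    obtain ⟨ι, hι, p, e, hp, ⟨E₀⟩⟩ := struct_mult G
    have hψex : ∀ i : ι, ∃ ψ : Multiplicative (ZMod (p i)) →*
        Multiplicative (ZMod (p i ^ e i)), e i ≠ 0 → Injective ψ := by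
      intro i
      by_cases h : e i = 0
      · exact ⟨1, fun hc => absurd h hc⟩
      · obtain ⟨ψ, hψ⟩ := exists_psi (p i) (e i) (hp i).ne_zero h
        exact ⟨ψ, fun _ => hψ⟩
    choose ψ hψ using hψex
    let Θ : ∀ i₀ : ι, ({i : ι // p i = p i₀ ∧ e i ≠ 0} → Multiplicative (ZMod (p i₀))) →*
        (∀ i, Multiplicative (ZMod (p i ^ e i))) := fun i₀ =>
      { toFun := fun x i => if h : p i = p i₀ ∧ e i ≠ 0 then
          ψ i ((zmodMulCast h.1.symm) (x ⟨i, h⟩)) else 1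
        map_one' := by
          funext i
          by_cases h : p i = p i₀ ∧ e i ≠ 0
          · rw [dif_pos h]
            simp
          · rw [dif_neg h]
            rfl
        map_mul' := fun a b => by
          funext i
          rw [Pi.mul_apply]
          by_cases h : p i = p i₀ ∧ e i ≠ 0
          · rw [dif_pos h, dif_pos h, dif_pos h]
            rw [show (a * b) ⟨i, h⟩ = a ⟨i, h⟩ * b ⟨i, h⟩ from rfl, map_mul, map_mul]
          · rw [dif_neg h, dif_neg h, dif_neg h, one_mul] }
    have hΘinj : ∀ i₀, Injective (Θ i₀) := by
      intro i₀
      rw [injective_iff_map_eq_one]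
      intro x hx
      funext i
      have h1 : (if h : p i.1 = p i₀ ∧ e i.1 ≠ 0 then
          ψ i.1 ((zmodMulCast h.1.symm) (x ⟨i.1, h⟩)) else 1) = 1 := congrFun hx i.1
      rw [dif_pos i.2] at h1
      have h2 : (zmodMulCast (i.2).1.symm) (x i) = 1 :=
        hψ i.1 i.2.2 (by rw [map_one]; exact h1)
      have h3 : x i = 1 := (zmodMulCast (i.2).1.symm).injective (by rw [map_one]; exact h2)
      exact h3
    let J : ∀ i₀ : ι, ({i : ι // p i = p i₀ ∧ e i ≠ 0} →
        Multiplicative (ZMod (p i₀))) →* G := fun i₀ => E₀.symm.toMonoidHom.comp (Θ i₀)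
    have hJinj : ∀ i₀, Injective (J i₀) := fun i₀ => E₀.symm.injective.comp (hΘinj i₀)
    by_cases hcase : ∃ i₀ : ι, (J i₀).range = ⊤
    · obtain ⟨i₀, htop⟩ := hcase
      have hsurj : Surjective (J i₀) := MonoidHom.range_eq_top.mp htop
      let Eiso : ({i : ι // p i = p i₀ ∧ e i ≠ 0} → Multiplicative (ZMod (p i₀))) ≃* G :=
        MulEquiv.ofBijective (J i₀) ⟨hJinj i₀, hsurj⟩
      have hr : rdim G = Fintype.card {i : ι // p i = p i₀ ∧ e i ≠ 0} :=
        elem_rdim (hp i₀) Eiso.symm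
      have hcard : Fintype.card {i : ι // p i = p i₀ ∧ e i ≠ 0} = n := by omega
      exact ⟨p i₀, hp i₀, ⟨Eiso.symm.trans (reindexMulEquiv (Fintype.equivFinOfCardEq hcard))⟩⟩
    · push_neg at hcase
      exfalso
      have hbound : ∀ i₁ : ι, e i₁ ≠ 0 →
          Fintype.card {i : ι // p i = p i₁ ∧ e i ≠ 0} ≤ n - 1 := by
        intro i₁ he₁
        set H := (J i₁).range with hH
        have hHne : H ≠ ⊤ := hcase i₁
        have hlt : rdim ↥H < n := h2 H hHne
        obtain ⟨ρG, hρG⟩ := Nat.sInf_mem hSne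
        have hHS : {k : ℕ | ∃ ρ : ↥H →* GL (Fin k) ℂ, Function.Injective ρ}.Nonempty :=
          ⟨rdim G, ρG.comp H.subtype, hρG.comp H.subtype_injective⟩
        obtain ⟨ρH, hρH⟩ := Nat.sInf_mem hHS
        obtain ⟨φH, hφH⟩ := exists_emb_of_faithful ρH hρH
        let Eiso : ({i : ι // p i = p i₁ ∧ e i ≠ 0} →
            Multiplicative (ZMod (p i₁))) ≃* ↥H := MonoidHom.ofInjective (hJinj i₁)
        have hle : Fintype.card {i : ι // p i = p i₁ ∧ e i ≠ 0} ≤ rdim ↥H := by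
          refine rank_le_of_emb (hp i₁) (φ := φH.comp Eiso.toMonoidHom) ?_
          exact hφH.comp Eiso.injective
        omega
      by_cases hd : ∃ i : ι, e i ≠ 0
      · obtain ⟨i₁, hi₁⟩ := hd
        have hpos : 0 < Fintype.card {i : ι // p i = p i₁ ∧ e i ≠ 0} :=
          Fintype.card_pos_iff.mpr ⟨⟨i₁, rfl, hi₁⟩⟩
        have hd1 : 1 ≤ n - 1 := by
          have h3 := hbound i₁ hi₁
          omega
        have hm : ∀ i, e i ≠ 0 →
            (Finset.univ.filter (fun i' => p i' = p i ∧ e i' ≠ 0)).card ≤ n - 1 := by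
          intro i hi
          have h4 := hbound i hi
          rwa [Fintype.card_subtype] at h4
        obtain ⟨r, hrinj⟩ := exists_fiber_rank p e (n-1) hd1 hm
        obtain ⟨φc, hφc⟩ := crt_emb p e hp r hrinj
        have h5 : rdim G ≤ n - 1 :=
          rdim_le_of_emb (φc.comp E₀.toMonoidHom) (hφc.comp E₀.injective)
        omega
      · push_neg at hd
        have hsub : Subsingleton (∀ i, Multiplicative (ZMod (p i ^ e i))) := by
          refine ⟨fun a b => funext fun i => ?_⟩
          haveI : Subsingleton (Multiplicative (ZMod (p i ^ e i))) := by
            rw [hd i, pow_zero]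
            infer_instance
          exact Subsingleton.elim _ _
        haveI hGsub : Subsingleton G := E₀.toEquiv.subsingleton
        have h6 : rdim G ≤ 0 :=
          rdim_le_of_emb (d := 0) 1 (fun a b _ => Subsingleton.elim a b)
        omega
  · rintro ⟨q, hq, ⟨E⟩⟩
    constructor
    · have h7 := elem_rdim hq E
      simpa using h7
    · intro H hH
      set K := H.map E.toMonoidHom with hK
      have hKne : K ≠ ⊤ := by
        intro hc
        apply hH
        apply Subgroup.map_injective (f := E.toMonoidHom) E.injective
        rw [← hK, hc, Subgroup.map_top_of_surjective _ E.surjective]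
      obtain ⟨m, hmn, ⟨EK⟩⟩ := subgroup_elem hq K hKne
      have hiso : ↥H ≃* ↥K := Subgroup.equivMapOfInjective H E.toMonoidHom E.injective
      have h8 : rdim ↥H = m := by
        have := elem_rdim hq (hiso.trans EK)
        simpa using this
      omega



end AuxRdimProof
end

section
/- Let G be a finite group that is minimally faithful of degree 3, and suppose the intersection Z(G) ∩ [G,G] of the center with the commutator subgroup has even order. Then every injective group homomorphism ρ : G → GL_3(ℂ) is reducible, i.e., there is a ℂ-subspace W of ℂ³ with W ≠ 0 and W ≠ ℂ³ that is invariant under ρ(g) for every g ∈ G; moreover there exists an injective group homomorphism from the commutator subgroup [G,G] into SL_2(ℂ). -/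
set_option synthInstance.maxHeartbeats 1000000
set_option maxHeartbeats 2000000


/-- An endomorphism of a 1-dimensional complex vector space with determinant `1`
is the identity. -/
lemma aux_one_dim {W : Type*} [AddCommGroup W] [Module ℂ W] [Module.Finite ℂ W]
    (h1 : Module.finrank ℂ W = 1) (f : W →ₗ[ℂ] W)
    (hdet : LinearMap.det f = 1) : f = LinearMap.id := by
  classical
  let b : Module.Basis (Fin 1) ℂ W := Module.finBasisOfFinrankEq ℂ W h1
  have hm : LinearMap.toMatrix b b f = LinearMap.toMatrix b b LinearMap.id := by
    rw [LinearMap.toMatrix_id]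
    have hd : (LinearMap.toMatrix b b f).det = 1 := by
      rw [LinearMap.det_toMatrix]; exact hdet
    rw [Matrix.det_fin_one] at hd
    ext i j
    fin_cases i; fin_cases j
    simpa using hd
  exact (LinearMap.toMatrix b b).injective hm

theorem stmt_6 (G : Type*) [Group G] [Finite G] (h : MinFaithful G 3)
    (heven : Even (Nat.card (Subgroup.center G ⊓ commutator G : Subgroup G))) :
    (∀ ρ : G →* GL (Fin 3) ℂ, Function.Injective ρ →
      ∃ W : Submodule ℂ (Fin 3 → ℂ), W ≠ ⊥ ∧ W ≠ ⊤ ∧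
        ∀ g : G, ∀ v ∈ W, Matrix.mulVec (ρ g : Matrix (Fin 3) (Fin 3) ℂ) v ∈ W) ∧
    ∃ ι : commutator G →* Matrix.SpecialLinearGroup (Fin 2) ℂ, Function.Injective ι := by
  classical
  haveI : Fintype (↥(Subgroup.center G ⊓ commutator G)) := Fintype.ofFinite _
  -- Cauchy: get an element of order 2 in the center ∩ commutator
  obtain ⟨z, hz⟩ : ∃ z : ↥(Subgroup.center G ⊓ commutator G), orderOf z = 2 := by
    refine exists_prime_orderOf_dvd_card 2 ?_
    rw [← Nat.card_eq_fintype_card]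
    exact heven.two_dvd
  set zG : G := (z : G) with hzGdef
  obtain ⟨hzc, hzk⟩ := Subgroup.mem_inf.mp z.2
  have hzo : orderOf zG = 2 := by rw [Subgroup.orderOf_coe]; exact hz
  have hz2 : zG * zG = 1 := by
    rw [← pow_two, ← hzo]; exact pow_orderOf_eq_one zG
  have hzne : zG ≠ 1 := by
    intro hcon
    rw [hcon, orderOf_one] at hzo
    omega
  -- Main construction: for each faithful ρ, a nontrivial invariant splitting
  have main : ∀ ρ : G →* GL (Fin 3) ℂ, Function.Injective ρ →
      ∃ W₁ W₂ : Submodule ℂ (Fin 3 → ℂ), IsCompl W₁ W₂ ∧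
        W₁ ≠ ⊥ ∧ W₁ ≠ ⊤ ∧ W₂ ≠ ⊥ ∧ W₂ ≠ ⊤ ∧
        (∀ g : G, ∀ v ∈ W₁, Matrix.mulVec (ρ g : Matrix (Fin 3) (Fin 3) ℂ) v ∈ W₁) ∧
        (∀ g : G, ∀ v ∈ W₂, Matrix.mulVec (ρ g : Matrix (Fin 3) (Fin 3) ℂ) v ∈ W₂) := by
    intro ρ hρ
    set M : Matrix (Fin 3) (Fin 3) ℂ := (ρ zG : Matrix (Fin 3) (Fin 3) ℂ) with hMdef
    have hMM : M * M = 1 := by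
      have h1 : ρ zG * ρ zG = 1 := by rw [← map_mul, hz2, map_one]
      calc M * M = ((ρ zG * ρ zG : GL (Fin 3) ℂ) : Matrix (Fin 3) (Fin 3) ℂ) := by
            rw [Units.val_mul]
        _ = 1 := by rw [h1]; rfl
    have hdetM : M.det = 1 := by
      have hker := Abelianization.commutator_subset_ker
        ((Matrix.GeneralLinearGroup.det).comp ρ) hzk
      have h1 : Matrix.GeneralLinearGroup.det (ρ zG) = 1 := hker
      have := congrArg (Units.val) h1
      simpa using this
    have hMne1 : M ≠ 1 := by
      intro hcon
      apply hzne
      apply hρ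
      rw [map_one, ← Units.val_eq_one]
      exact hcon
    have hMnem1 : M ≠ -1 := by
      intro hcon
      rw [hcon] at hdetM
      rw [show ((-1 : Matrix (Fin 3) (Fin 3) ℂ)) = -(1 : Matrix (Fin 3) (Fin 3) ℂ) from rfl,
        Matrix.det_neg, Matrix.det_one, Fintype.card_fin] at hdetM
      norm_num at hdetM
    set Wp : Submodule ℂ (Fin 3 → ℂ) :=
      LinearMap.ker (Matrix.toLin' M - LinearMap.id) with hWpdef
    set Wm : Submodule ℂ (Fin 3 → ℂ) :=
      LinearMap.ker (Matrix.toLin' M + LinearMap.id) with hWmdef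
    have memp : ∀ v, v ∈ Wp ↔ M.mulVec v = v := by
      intro v
      rw [hWpdef, LinearMap.mem_ker, LinearMap.sub_apply, LinearMap.id_apply, sub_eq_zero,
        Matrix.toLin'_apply]
    have memm : ∀ v, v ∈ Wm ↔ M.mulVec v = -v := by
      intro v
      rw [hWmdef, LinearMap.mem_ker, LinearMap.add_apply, LinearMap.id_apply,
        add_eq_zero_iff_eq_neg, Matrix.toLin'_apply]
    have hMeq1 : (∀ v, M.mulVec v = v) → False := by
      intro hall
      apply hMne1
      apply Matrix.toLin'.injective
      rw [Matrix.toLin'_one]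
      apply LinearMap.ext
      intro v
      rw [Matrix.toLin'_apply, LinearMap.id_apply]
      exact hall v
    have hMeqm1 : (∀ v, M.mulVec v = -v) → False := by
      intro hall
      apply hMnem1
      apply Matrix.toLin'.injective
      apply LinearMap.ext
      intro v
      rw [Matrix.toLin'_apply, Matrix.toLin'_apply, Matrix.neg_mulVec, Matrix.one_mulVec]
      exact hall v
    have hWptop : Wp ≠ ⊤ := by
      intro hcon
      exact hMeq1 fun v => (memp v).mp (hcon ▸ Submodule.mem_top)
    have hWmtop : Wm ≠ ⊤ := by
      intro hcon
      exact hMeqm1 fun v => (memm v).mp (hcon ▸ Submodule.mem_top)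
    have hmemp' : ∀ v : Fin 3 → ℂ, v + M.mulVec v ∈ Wp := by
      intro v
      rw [memp, Matrix.mulVec_add, Matrix.mulVec_mulVec, hMM, Matrix.one_mulVec, add_comm]
    have hmemm' : ∀ v : Fin 3 → ℂ, v - M.mulVec v ∈ Wm := by
      intro v
      rw [memm, Matrix.mulVec_sub, Matrix.mulVec_mulVec, hMM, Matrix.one_mulVec, neg_sub]
    have hWpbot : Wp ≠ ⊥ := by
      intro hcon
      apply hMeqm1
      intro v
      have h1 := hmemp' v
      rw [hcon, Submodule.mem_bot] at h1
      have h2 : M.mulVec v = -v := by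
        rw [← neg_eq_of_add_eq_zero_right h1]
      exact h2
    have hWmbot : Wm ≠ ⊥ := by
      intro hcon
      apply hMeq1
      intro v
      have h1 := hmemm' v
      rw [hcon, Submodule.mem_bot, sub_eq_zero] at h1
      exact h1.symm
    have hdisj : Disjoint Wp Wm := by
      rw [Submodule.disjoint_def]
      intro v hvp hvm
      have h1 : M.mulVec v = v := (memp v).mp hvp
      have h2 : M.mulVec v = -v := (memm v).mp hvm
      have h3 : v + v = 0 := by
        nth_rewrite 2 [show v = -v from h1.symm.trans h2]
        exact add_neg_cancel v
      have h4 : (2 : ℂ) • v = 0 := by rw [two_smul]; exact h3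
      rcases smul_eq_zero.mp h4 with hc | hv
      · norm_num at hc
      · exact hv
    have hcodis : Wp ⊔ Wm = ⊤ := by
      rw [eq_top_iff]
      rintro v -
      have hv : v = (2⁻¹ : ℂ) • (v + M.mulVec v) + (2⁻¹ : ℂ) • (v - M.mulVec v) := by
        rw [smul_add, smul_sub]
        rw [show ∀ a b : Fin 3 → ℂ, (2⁻¹ : ℂ) • a + (2⁻¹ : ℂ) • b + ((2⁻¹ : ℂ) • a - (2⁻¹ : ℂ) • b)
          = (2⁻¹ : ℂ) • a + (2⁻¹ : ℂ) • a + ((2⁻¹ : ℂ) • b - (2⁻¹ : ℂ) • b) from fun a b => by abel]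
        rw [sub_self, add_zero, ← add_smul]
        norm_num
      rw [hv]
      exact Submodule.add_mem _
        (Submodule.mem_sup_left (Submodule.smul_mem _ _ (hmemp' v)))
        (Submodule.mem_sup_right (Submodule.smul_mem _ _ (hmemm' v)))
    have hcompl : IsCompl Wp Wm := ⟨hdisj, codisjoint_iff.mpr hcodis⟩
    have hcommM : ∀ g : G, M * (ρ g : Matrix (Fin 3) (Fin 3) ℂ)
        = (ρ g : Matrix (Fin 3) (Fin 3) ℂ) * M := by
      intro g
      have h1 : zG * g = g * zG := ((Subgroup.mem_center_iff.mp hzc) g).symm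
      have h2 : ρ zG * ρ g = ρ g * ρ zG := by rw [← map_mul, ← map_mul, h1]
      have := congrArg (Units.val) h2
      simpa [Units.val_mul] using this
    have hinvp : ∀ g : G, ∀ v ∈ Wp, Matrix.mulVec (ρ g : Matrix (Fin 3) (Fin 3) ℂ) v ∈ Wp := by
      intro g v hv
      rw [memp] at hv ⊢
      rw [Matrix.mulVec_mulVec, hcommM g, ← Matrix.mulVec_mulVec, hv]
    have hinvm : ∀ g : G, ∀ v ∈ Wm, Matrix.mulVec (ρ g : Matrix (Fin 3) (Fin 3) ℂ) v ∈ Wm := by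
      intro g v hv
      rw [memm] at hv ⊢
      rw [Matrix.mulVec_mulVec, hcommM g, ← Matrix.mulVec_mulVec, hv, Matrix.mulVec_neg]
    exact ⟨Wp, Wm, hcompl, hWpbot, hWptop, hWmbot, hWmtop, hinvp, hinvm⟩
  constructor
  · intro ρ hρ
    obtain ⟨W₁, W₂, _, hb, ht, _, _, hinv, _⟩ := main ρ hρ
    exact ⟨W₁, hb, ht, hinv⟩
  · -- get a faithful 3-dimensional representation from `rdim G = 3`
    obtain ⟨ρ, hρ⟩ : ∃ ρ : G →* GL (Fin 3) ℂ, Function.Injective ρ := by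
      have h1 : sInf {n : ℕ | ∃ ρ : G →* GL (Fin n) ℂ, Function.Injective ρ} = 3 := h.1
      have hne : {n : ℕ | ∃ ρ : G →* GL (Fin n) ℂ, Function.Injective ρ}.Nonempty := by
        by_contra hcon
        rw [Set.not_nonempty_iff_eq_empty] at hcon
        rw [hcon, Nat.sInf_empty] at h1
        omega
      have hmem := Nat.sInf_mem hne
      rw [h1] at hmem
      exact hmem
    obtain ⟨W₁, W₂, hcompl, hb1, ht1, hb2, ht2, hinv1, hinv2⟩ := main ρ hρ
    -- finrank bookkeeping
    have hV3 : Module.finrank ℂ (Fin 3 → ℂ) = 3 := by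
      simp [Module.finrank_pi]
    have hsum : Module.finrank ℂ W₁ + Module.finrank ℂ W₂ = 3 := by
      rw [Submodule.finrank_add_eq_of_isCompl hcompl, hV3]
    have hpos1 : Module.finrank ℂ W₁ ≠ 0 := fun h0 => hb1 (Submodule.finrank_eq_zero.mp h0)
    have hpos2 : Module.finrank ℂ W₂ ≠ 0 := fun h0 => hb2 (Submodule.finrank_eq_zero.mp h0)
    have hlt1 : Module.finrank ℂ W₁ < 3 := by
      have := Submodule.finrank_lt ht1
      rwa [hV3] at this
    have hcases : (Module.finrank ℂ W₁ = 1 ∧ Module.finrank ℂ W₂ = 2) ∨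
        (Module.finrank ℂ W₁ = 2 ∧ Module.finrank ℂ W₂ = 1) := by omega
    obtain ⟨U₁, U₂, hUcompl, hU1inv, hU2inv, hU1r, hU2r⟩ :
        ∃ U₁ U₂ : Submodule ℂ (Fin 3 → ℂ), IsCompl U₁ U₂ ∧
          (∀ g : G, ∀ v ∈ U₁, Matrix.mulVec (ρ g : Matrix (Fin 3) (Fin 3) ℂ) v ∈ U₁) ∧
          (∀ g : G, ∀ v ∈ U₂, Matrix.mulVec (ρ g : Matrix (Fin 3) (Fin 3) ℂ) v ∈ U₂) ∧
          Module.finrank ℂ U₁ = 1 ∧ Module.finrank ℂ U₂ = 2 := by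
      rcases hcases with ⟨e1, e2⟩ | ⟨e1, e2⟩
      · exact ⟨W₁, W₂, hcompl, hinv1, hinv2, e1, e2⟩
      · exact ⟨W₂, W₁, hcompl.symm, hinv2, hinv1, e2, e1⟩
    -- restrict the representation to U₁ and U₂
    have hU1inv' : ∀ g : G, ∀ v ∈ U₁,
        (Matrix.toLin' ((ρ g : Matrix (Fin 3) (Fin 3) ℂ))) v ∈ U₁ := by
      intro g v hv; rw [Matrix.toLin'_apply]; exact hU1inv g v hv
    have hU2inv' : ∀ g : G, ∀ v ∈ U₂,
        (Matrix.toLin' ((ρ g : Matrix (Fin 3) (Fin 3) ℂ))) v ∈ U₂ := by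
      intro g v hv; rw [Matrix.toLin'_apply]; exact hU2inv g v hv
    let r₁ : G →* Module.End ℂ U₁ :=
      { toFun := fun g =>
          (Matrix.toLin' ((ρ g : Matrix (Fin 3) (Fin 3) ℂ))).restrict (hU1inv' g)
        map_one' := by
          ext v
          simp [LinearMap.restrict_apply, Matrix.toLin'_apply, Matrix.one_mulVec]
        map_mul' := by
          intro a b
          ext v
          simp [LinearMap.restrict_apply, Module.End.mul_apply, Units.val_mul,
            Matrix.toLin'_apply, Matrix.mulVec_mulVec] }
    let r₂ : G →* Module.End ℂ U₂ :=
      { toFun := fun g =>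
          (Matrix.toLin' ((ρ g : Matrix (Fin 3) (Fin 3) ℂ))).restrict (hU2inv' g)
        map_one' := by
          ext v
          simp [LinearMap.restrict_apply, Matrix.toLin'_apply, Matrix.one_mulVec]
        map_mul' := by
          intro a b
          ext v
          simp [LinearMap.restrict_apply, Module.End.mul_apply, Units.val_mul,
            Matrix.toLin'_apply, Matrix.mulVec_mulVec] }
    -- determinants of both restrictions are trivial on the commutator subgroup
    have hdet1 : ∀ g : commutator G, LinearMap.det (r₁ (g : G)) = 1 := by
      intro g
      have hker := Abelianization.commutator_subset_ker
        (((LinearMap.det : Module.End ℂ U₁ →* ℂ).comp r₁).toHomUnits) g.2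
      have h1 := congrArg (Units.val) hker
      simpa using h1
    have hdet2 : ∀ g : commutator G, LinearMap.det (r₂ (g : G)) = 1 := by
      intro g
      have hker := Abelianization.commutator_subset_ker
        (((LinearMap.det : Module.End ℂ U₂ →* ℂ).comp r₂).toHomUnits) g.2
      have h1 := congrArg (Units.val) hker
      simpa using h1
    let b₂ : Module.Basis (Fin 2) ℂ U₂ := Module.finBasisOfFinrankEq ℂ U₂ hU2r
    let φ₀ : G →* Matrix (Fin 2) (Fin 2) ℂ :=
      { toFun := fun g => LinearMap.toMatrix b₂ b₂ (r₂ g)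
        map_one' := by
          show LinearMap.toMatrix b₂ b₂ (r₂ 1) = 1
          rw [map_one, Module.End.one_eq_id, LinearMap.toMatrix_id]
        map_mul' := by
          intro a b
          show LinearMap.toMatrix b₂ b₂ (r₂ (a * b)) = _
          rw [map_mul, LinearMap.toMatrix_mul] }
    have hφdet : ∀ g : commutator G, (φ₀ (g : G)).det = 1 := by
      intro g
      show (LinearMap.toMatrix b₂ b₂ (r₂ (g : G))).det = 1
      rw [LinearMap.det_toMatrix]
      exact hdet2 g
    refine ⟨{ toFun := fun g => ⟨φ₀ (g : G), hφdet g⟩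
              map_one' := ?_
              map_mul' := ?_ }, ?_⟩
    · exact Subtype.ext (by simp)
    · intro a b
      exact Subtype.ext (by simp; rfl)
    · rw [injective_iff_map_eq_one]
      intro g hg
      have hmat : φ₀ (g : G) = 1 := congrArg Subtype.val hg
      have hr2 : r₂ (g : G) = 1 := by
        apply (LinearMap.toMatrix b₂ b₂).injective
        rw [show LinearMap.toMatrix b₂ b₂ (r₂ (g : G)) = φ₀ (g : G) from rfl, hmat,
          Module.End.one_eq_id, LinearMap.toMatrix_id]
      have hr1 : r₁ (g : G) = 1 := by
        rw [Module.End.one_eq_id]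
        exact aux_one_dim hU1r _ (hdet1 g)
      -- conclude the matrix is the identity
      have hfix1 : ∀ v ∈ U₁, Matrix.mulVec ((ρ (g : G) : Matrix (Fin 3) (Fin 3) ℂ)) v = v := by
        intro v hv
        have := congrArg Subtype.val (LinearMap.ext_iff.mp hr1 ⟨v, hv⟩)
        simpa [r₁, LinearMap.restrict_apply, Matrix.toLin'_apply] using this
      have hfix2 : ∀ v ∈ U₂, Matrix.mulVec ((ρ (g : G) : Matrix (Fin 3) (Fin 3) ℂ)) v = v := by
        intro v hv
        have := congrArg Subtype.val (LinearMap.ext_iff.mp hr2 ⟨v, hv⟩)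
        simpa [r₂, LinearMap.restrict_apply, Matrix.toLin'_apply] using this
      have hmat1 : ((ρ (g : G) : Matrix (Fin 3) (Fin 3) ℂ)) = 1 := by
        apply Matrix.toLin'.injective
        rw [Matrix.toLin'_one]
        apply LinearMap.ext
        intro v
        rw [Matrix.toLin'_apply, LinearMap.id_apply]
        have hv : v ∈ U₁ ⊔ U₂ := by rw [hUcompl.sup_eq_top]; trivial
        obtain ⟨a, ha, b, hb, rfl⟩ := Submodule.mem_sup.mp hv
        rw [Matrix.mulVec_add, hfix1 a ha, hfix2 b hb]
      have hρg : ρ (g : G) = 1 := Units.ext (by simpa using hmat1)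
      have : (g : G) = 1 := hρ (by rw [hρg, map_one])
      exact Subtype.ext this
end

section
/- Let G be a finite nonabelian 2-group that is minimally faithful of degree 3. Then the center Z(G) is not cyclic. -/
open Subgroup Module



/-- In a nontrivial finite 2-group, some power of any nontrivial element is an involution. -/
lemma exists_invol_pow {Z : Type*} [Group Z] [Finite Z] (hp : IsPGroup 2 Z)
    {x : Z} (hx : x ≠ 1) : ∃ j : ℕ, x ^ j ≠ 1 ∧ (x ^ j) ^ 2 = 1 := by
  obtain ⟨k, hk⟩ := hp x
  have hdvd : orderOf x ∣ 2 ^ k := orderOf_dvd_of_pow_eq_one hk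
  obtain ⟨m, hm, hord⟩ := (Nat.dvd_prime_pow Nat.prime_two).mp hdvd
  have hm0 : m ≠ 0 := by
    rintro rfl
    simp only [pow_zero] at hord
    exact hx (orderOf_eq_one_iff.mp hord)
  refine ⟨2 ^ (m - 1), ?_, ?_⟩
  · intro h
    have := orderOf_dvd_of_pow_eq_one h
    rw [hord] at this
    have h2 : 2 ^ m ≤ 2 ^ (m - 1) := Nat.le_of_dvd (by positivity) this
    have := (pow_lt_pow_iff_right₀ (a := 2) one_lt_two).mpr (Nat.sub_lt (Nat.pos_of_ne_zero hm0) one_pos)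
    omega
  · rw [← pow_mul]
    have : 2 ^ (m - 1) * 2 = 2 ^ m := by
      rw [← pow_succ]
      congr 1
      omega
    rw [this, ← hord]
    exact pow_orderOf_eq_one x

/-- A nontrivial normal subgroup of a finite 2-group contains a nontrivial central element. -/
lemma normal_meets_center {G : Type*} [Group G] [Finite G] (hp : IsPGroup 2 G)
    (N : Subgroup G) (hN : N.Normal) (hbot : N ≠ ⊥) :
    ∃ t : G, t ∈ N ∧ t ∈ Subgroup.center G ∧ t ≠ 1 := by
  haveI := hN
  haveI : Fact (Nat.Prime 2) := ⟨Nat.prime_two⟩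
  have hpc : IsPGroup 2 (ConjAct G) := hp.of_equiv ConjAct.toConjAct
  have hone : (1 : N) ∈ MulAction.fixedPoints (ConjAct G) N := by
    intro g
    ext
    rw [ConjAct.Subgroup.val_conj_smul]
    simp [ConjAct.smul_def]
  have hcard : 2 ∣ Nat.card N := by
    haveI : Nontrivial N := (Subgroup.nontrivial_iff_ne_bot N).mpr hbot
    obtain ⟨n, hn0, hn⟩ := (hp.to_subgroup N).nontrivial_iff_card.mp inferInstance
    exact hn ▸ dvd_pow_self 2 hn0.ne'
  obtain ⟨b, hbfix, hb1⟩ := hpc.exists_fixed_point_of_prime_dvd_card_of_fixed_point N hcard hone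
  refine ⟨(b : G), b.2, ?_, ?_⟩
  · rw [Subgroup.mem_center_iff]
    intro g
    have := hbfix (ConjAct.toConjAct g)
    have hval : g * (b : G) * g⁻¹ = b := by
      have := congrArg (Subtype.val) this
      rwa [ConjAct.Subgroup.val_conj_smul, ConjAct.smul_def, ConjAct.ofConjAct_toConjAct] at this
    calc g * (b : G) = (g * b * g⁻¹) * g := by group
      _ = b * g := by rw [hval]
  · intro h
    exact hb1 (Subtype.ext (by simp [h])).symm

/-- Uniqueness of involutions in a finite cyclic group. -/
lemma invol_unique {Z : Type*} [Group Z] [Finite Z] (hZ : IsCyclic Z)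
    {x y : Z} (hx : x ≠ 1) (hx2 : x ^ 2 = 1) (hy : y ≠ 1) (hy2 : y ^ 2 = 1) : x = y := by
  haveI := Fintype.ofFinite Z
  haveI : Fact (Nat.Prime 2) := ⟨Nat.prime_two⟩
  have hox : orderOf x = 2 := orderOf_eq_prime hx2 hx
  have hoy : orderOf y = 2 := orderOf_eq_prime hy2 hy
  have hdvd : 2 ∣ Fintype.card Z := hox ▸ orderOf_dvd_card
  have hcount := IsCyclic.card_orderOf_eq_totient (α := Z) hdvd
  rw [Nat.totient_two] at hcount
  classical
  have hxmem : x ∈ Finset.filter (fun a => orderOf a = 2) Finset.univ := by simp [hox]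
  have hymem : y ∈ Finset.filter (fun a => orderOf a = 2) Finset.univ := by simp [hoy]
  by_contra hne
  have : 2 ≤ (Finset.filter (fun a => orderOf a = 2) (Finset.univ : Finset Z)).card :=
    Finset.one_lt_card.mpr ⟨x, hxmem, y, hymem, hne⟩
  omega

section defs
/-- The subgroup of elements acting trivially on an invariant submodule. -/
def actKer {G V' : Type*} [Group G] [AddCommGroup V'] [Module ℂ V'] (π : G →* Module.End ℂ V')
    (M : Submodule ℂ V') : Subgroup G where
  carrier := {h | ∀ v ∈ M, π h v = v}
  one_mem' := by intro v _; simp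
  mul_mem' := by
    intro a b ha hb v hv
    rw [map_mul, Module.End.mul_apply, hb v hv, ha v hv]
  inv_mem' := by
    intro a ha v hv
    have h1 : π a⁻¹ (π a v) = v := by
      rw [← Module.End.mul_apply, ← map_mul, inv_mul_cancel, map_one, Module.End.one_apply]
    rwa [ha v hv] at h1

lemma mem_actKer {G V' : Type*} [Group G] [AddCommGroup V'] [Module ℂ V']
    {π : G →* Module.End ℂ V'} {M : Submodule ℂ V'} {h : G} :
    h ∈ actKer π M ↔ ∀ v ∈ M, π h v = v := Iff.rfl

lemma actKer_normal {G V' : Type*} [Group G] [AddCommGroup V'] [Module ℂ V']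
    (π : G →* Module.End ℂ V') (M : Submodule ℂ V')
    (hM : ∀ h : G, ∀ v ∈ M, π h v ∈ M) : (actKer π M).Normal := by
  constructor
  intro n hn g v hv
  have hgv : π g⁻¹ v ∈ M := hM g⁻¹ v hv
  rw [map_mul, map_mul, Module.End.mul_apply, Module.End.mul_apply, hn _ hgv,
    ← Module.End.mul_apply, ← map_mul, mul_inv_cancel, map_one, Module.End.one_apply]
end defs

lemma key {G : Type*} [Group G] [Finite G] (hp : IsPGroup 2 G)
    (hna : ¬ ∀ a b : G, a * b = b * a) (hcyc : IsCyclic (Subgroup.center G))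
    (ρ : G →* GL (Fin 3) ℂ) (hρ : Function.Injective ρ) :
    ∃ φ : G →* GL (Fin 2) ℂ, Function.Injective φ := by
  classical
  have hGnt : Nontrivial G := by
    by_contra hcon
    rw [not_nontrivial_iff_subsingleton] at hcon
    exact hna fun a b => Subsingleton.elim _ _
  -- the representation as endomorphisms
  let π : G →* Module.End ℂ (Fin 3 → ℂ) :=
    (Matrix.toLinAlgEquiv' (R := ℂ) (n := Fin 3)).toRingEquiv.toRingHom.toMonoidHom.comp
      ((Units.coeHom (Matrix (Fin 3) (Fin 3) ℂ)).comp ρ)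
  have hπinj : Function.Injective π := by
    intro a b hab
    exact hρ (Units.ext ((Matrix.toLinAlgEquiv' (R := ℂ) (n := Fin 3)).injective hab))
  -- the central involution s
  haveI : Nontrivial (Subgroup.center G) := hp.center_nontrivial
  obtain ⟨x0, hx0⟩ := exists_ne (1 : Subgroup.center G)
  obtain ⟨j, hj1, hj2⟩ := exists_invol_pow (hp.to_subgroup (Subgroup.center G)) hx0
  set s' : Subgroup.center G := x0 ^ j with hs'
  set s : G := (s' : G) with hs_def
  have hs_center : s ∈ Subgroup.center G := s'.2
  have hs_ne : s ≠ 1 := fun h => hj1 (Subtype.ext h)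
  have hs_norm : ∀ N : Subgroup G, N.Normal → N ≠ ⊥ → s ∈ N := by
    intro N hN hbot
    obtain ⟨t, htN, htc, htne⟩ := normal_meets_center hp N hN hbot
    obtain ⟨i, hi1, hi2⟩ := exists_invol_pow (hp.to_subgroup (Subgroup.center G))
      (x := ⟨t, htc⟩) (fun hcon => htne (congrArg Subtype.val hcon))
    have heq : (⟨t, htc⟩ : Subgroup.center G) ^ i = s' := invol_unique hcyc hi1 hi2 hj1 hj2
    have heq' : t ^ i = s := by
      have := congrArg Subtype.val heq
      simpa using this
    exact heq' ▸ pow_mem htN i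
  -- scaled conjugates force scale 1
  have hu_one : ∀ (u : ℂ) (g h : G), π (h⁻¹ * g * h) = u • π g → u = 1 := by
    intro u g h heq
    have hdet : ∀ x : G, LinearMap.det (π x) * LinearMap.det (π x⁻¹) = 1 := by
      intro x
      rw [← map_mul, ← map_mul, mul_inv_cancel, map_one, map_one]
    have hdconj : LinearMap.det (π (h⁻¹ * g * h)) = LinearMap.det (π g) := by
      rw [map_mul, map_mul, map_mul, map_mul]
      have h2 : LinearMap.det (π h⁻¹) * LinearMap.det (π h) = 1 := by
        have := hdet h⁻¹
        rwa [inv_inv] at this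
      calc LinearMap.det (π h⁻¹) * LinearMap.det (π g) * LinearMap.det (π h)
          = LinearMap.det (π h⁻¹) * LinearMap.det (π h) * LinearMap.det (π g) := by ring
        _ = LinearMap.det (π g) := by rw [h2, one_mul]
    have hu3 : u ^ 3 = 1 := by
      have h2 : LinearMap.det (u • π g) = u ^ 3 * LinearMap.det (π g) := by
        rw [LinearMap.det_smul, finrank_fin_fun]
      rw [heq, h2] at hdconj
      have hdg : LinearMap.det (π g) ≠ 0 := by
        intro h0
        have := hdet g
        rw [h0, zero_mul] at this
        exact zero_ne_one this
      field_simp at hdconj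
      exact hdconj
    obtain ⟨k, hk⟩ := hp g
    have hu2k : u ^ (2 ^ k) = 1 := by
      have h1 : (h⁻¹ * g * h) ^ (2 ^ k) = 1 := by
        have : h⁻¹ * g * h = h⁻¹ * g * h⁻¹⁻¹ := by rw [inv_inv]
        rw [this, conj_pow, hk]
        simp
      have h2 : π ((h⁻¹ * g * h) ^ (2 ^ k)) = u ^ (2 ^ k) • (π g) ^ (2 ^ k) := by
        rw [map_pow, heq, smul_pow]
      rw [h1, map_one, ← map_pow, hk, map_one] at h2
      have h3 := congrFun (congrArg (fun f : Module.End ℂ (Fin 3 → ℂ) => (f : (Fin 3 → ℂ) → (Fin 3 → ℂ))) h2) (fun _ => (1 : ℂ))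
      simp only [Module.End.one_apply, LinearMap.smul_apply, Pi.smul_apply, smul_eq_mul] at h3
      have h4 := congrFun h3 0
      simpa using h4.symm
    have hdvd1 : orderOf u ∣ 3 := orderOf_dvd_of_pow_eq_one hu3
    have hdvd2 : orderOf u ∣ 2 ^ k := orderOf_dvd_of_pow_eq_one hu2k
    have hcop : Nat.Coprime (2 ^ k) 3 := Nat.Coprime.pow_left k (by decide)
    have : orderOf u ∣ 1 := by
      have := Nat.dvd_gcd hdvd2 hdvd1
      rwa [Nat.Coprime.gcd_eq_one hcop] at this
    rw [Nat.dvd_one] at this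
    exact orderOf_eq_one_iff.mp this
  -- Step I : a central element acting non-scalarly
  have hstep1 : ∃ z : G, z ∈ Subgroup.center G ∧ ¬ ∃ a : ℂ, π z = a • 1 := by
    by_contra hcon
    push_neg at hcon
    have hcne : Subgroup.center G ≠ ⊤ := by
      intro htop
      exact hna fun a b =>
        (Subgroup.mem_center_iff.mp (htop ▸ Subgroup.mem_top a) b).symm
    obtain ⟨x, hx⟩ : ∃ x : G, x ∉ Subgroup.center G := by
      by_contra hcon2
      push_neg at hcon2
      exact hcne (Subgroup.eq_top_iff' _ |>.mpr hcon2)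
    haveI : Nontrivial (G ⧸ Subgroup.center G) :=
      ⟨⟨QuotientGroup.mk x, 1, fun hmk => hx ((QuotientGroup.eq_one_iff x).mp hmk)⟩⟩
    haveI : Finite (G ⧸ Subgroup.center G) := Quotient.finite _
    haveI : Nontrivial (Subgroup.center (G ⧸ Subgroup.center G)) :=
      (hp.to_quotient (Subgroup.center G)).center_nontrivial
    obtain ⟨q, hq⟩ := exists_ne (1 : Subgroup.center (G ⧸ Subgroup.center G))
    obtain ⟨g, hg⟩ := QuotientGroup.mk_surjective (q : G ⧸ Subgroup.center G)
    have hgnc : g ∉ Subgroup.center G := by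
      intro hmem
      apply hq
      apply Subtype.ext
      show (q : G ⧸ Subgroup.center G) = 1
      rw [← hg]
      exact (QuotientGroup.eq_one_iff g).mpr hmem
    have hcomm : ∀ h : G, g⁻¹ * (h⁻¹ * g * h) ∈ Subgroup.center G := by
      intro h
      rw [← QuotientGroup.eq_one_iff]
      have hqc := Subgroup.mem_center_iff.mp q.2 (QuotientGroup.mk h)
      rw [← hg] at hqc
      have : (QuotientGroup.mk (g⁻¹ * (h⁻¹ * g * h)) : G ⧸ Subgroup.center G)
          = (QuotientGroup.mk g)⁻¹ * ((QuotientGroup.mk h)⁻¹ * QuotientGroup.mk g * QuotientGroup.mk h) := by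
        simp [QuotientGroup.mk_mul, QuotientGroup.mk_inv]
      rw [this, mul_assoc ((QuotientGroup.mk h : G ⧸ Subgroup.center G))⁻¹
        (QuotientGroup.mk g) (QuotientGroup.mk h), ← hqc]
      group
    apply hgnc
    rw [Subgroup.mem_center_iff]
    intro h
    obtain ⟨a, ha⟩ := hcon _ (hcomm h)
    have hconj : π (h⁻¹ * g * h) = a • π g := by
      have hgr : h⁻¹ * g * h = g * (g⁻¹ * (h⁻¹ * g * h)) := by group
      rw [hgr, map_mul, ha, mul_smul_comm, mul_one]
    have hu := hu_one a g h hconj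
    rw [hu, one_smul] at hconj
    have hfix : h⁻¹ * g * h = g := hπinj hconj
    have h2 := congrArg (fun y => h * y) hfix
    simp only [mul_assoc, mul_inv_cancel_left] at h2
    simpa [mul_assoc] using h2.symm
  -- Step II: eigenspace decomposition of the action of z
  obtain ⟨z, hzc, hznons⟩ := hstep1
  have hAcomm : ∀ h : G, π h * π z = π z * π h := by
    intro h
    rw [← map_mul, ← map_mul, Subgroup.mem_center_iff.mp hzc h]
  have hEinv : ∀ (μ : ℂ) (h : G), ∀ v ∈ (π z).eigenspace μ, π h v ∈ (π z).eigenspace μ := by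
    intro μ h v hv
    rw [Module.End.mem_eigenspace_iff] at hv ⊢
    calc π z (π h v) = (π z * π h) v := rfl
      _ = (π h * π z) v := by rw [hAcomm]
      _ = π h (π z v) := rfl
      _ = π h (μ • v) := by rw [hv]
      _ = μ • π h v := map_smul _ _ _
  obtain ⟨k, hk⟩ := hp z
  have hApow : (π z) ^ (2 ^ k) = 1 := by rw [← map_pow, hk, map_one]
  have hss : (π z).IsSemisimple := by
    apply Module.End.isSemisimple_of_squarefree_aeval_eq_zero
      (p := Polynomial.X ^ (2 ^ k) - 1)
    · refine (Polynomial.X_pow_sub_one_separable_iff.mpr ?_).squarefree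
      simp only [ne_eq, Nat.cast_pow, Nat.cast_ofNat, pow_eq_zero_iff', OfNat.ofNat_ne_zero,
        false_and, not_false_eq_true]
    · rw [map_sub, map_pow, Polynomial.aeval_X, map_one, hApow, sub_self]
  have htop : ⨆ μ : ℂ, (π z).eigenspace μ = ⊤ := by
    have h1 := Module.End.iSup_maxGenEigenspace_eq_top (π z)
    have h2 : ∀ μ : ℂ, (π z).maxGenEigenspace μ = (π z).eigenspace μ :=
      hss.isFinitelySemisimple.maxGenEigenspace_eq_eigenspace
    rw [← h1]
    exact iSup_congr fun μ => (h2 μ).symm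
  obtain ⟨μ1, hμ1⟩ := Module.End.exists_eigenvalue (π z)
  set D : Submodule ℂ (Fin 3 → ℂ) :=
    ⨆ μ : ℂ, ⨆ _ : μ ≠ μ1, (π z).eigenspace μ with hD
  have hdisj : Disjoint ((π z).eigenspace μ1) D := (π z).eigenspaces_iSupIndep μ1
  have hsupT : (π z).eigenspace μ1 ⊔ D = ⊤ := by
    rw [← htop]
    apply le_antisymm
    · apply sup_le (le_iSup _ μ1)
      rw [hD]
      refine iSup_le fun μ => iSup_le fun _ => le_iSup _ μ
    · refine iSup_le fun μ => ?_
      by_cases hμ : μ = μ1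
      · subst hμ; exact le_sup_left
      · exact le_trans (le_iSup₂ (f := fun μ _ => (π z).eigenspace μ) μ hμ) le_sup_right
  have hDinv : ∀ h : G, ∀ v ∈ D, π h v ∈ D := by
    intro h v hv
    have hmap : Submodule.map (π h) D ≤ D := by
      rw [hD, Submodule.map_iSup]
      refine iSup_le fun μ => ?_
      rw [Submodule.map_iSup]
      refine iSup_le fun hμ => ?_
      refine le_trans ?_ (le_iSup₂ (f := fun μ _ => (π z).eigenspace μ) μ hμ)
      rintro w ⟨v', hv', rfl⟩
      exact hEinv μ h v' hv'
    exact hmap ⟨v, hv, rfl⟩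
  have hrank : finrank ℂ ((π z).eigenspace μ1) + finrank ℂ D = 3 := by
    have hh := Submodule.finrank_sup_add_finrank_inf_eq ((π z).eigenspace μ1) D
    rw [hsupT, hdisj.eq_bot] at hh
    rw [finrank_top, finrank_fin_fun, finrank_bot] at hh
    omega
  have hE1pos : 0 < finrank ℂ ((π z).eigenspace μ1) := by
    rw [finrank_pos_iff]
    exact (Submodule.nontrivial_iff_ne_bot).mpr hμ1
  have hE1ne3 : finrank ℂ ((π z).eigenspace μ1) ≠ 3 := by
    intro h3
    apply hznons
    have hTopE : (π z).eigenspace μ1 = ⊤ :=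
      Submodule.eq_top_of_finrank_eq (by rw [h3, finrank_fin_fun])
    refine ⟨μ1, ?_⟩
    apply LinearMap.ext
    intro v
    have hv : v ∈ (π z).eigenspace μ1 := hTopE ▸ Submodule.mem_top
    rw [Module.End.mem_eigenspace_iff] at hv
    simpa using hv
  have hE1le : finrank ℂ ((π z).eigenspace μ1) ≤ 3 := by omega
  -- W and L
  obtain ⟨W, L, hWinv, hLinv, hWL, hW2, hL1⟩ :
      ∃ W L : Submodule ℂ (Fin 3 → ℂ),
        (∀ h : G, ∀ v ∈ W, π h v ∈ W) ∧ (∀ h : G, ∀ v ∈ L, π h v ∈ L) ∧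
        W ⊔ L = ⊤ ∧ finrank ℂ W = 2 ∧ finrank ℂ L = 1 := by
    rcases (by omega : finrank ℂ ((π z).eigenspace μ1) = 1 ∨
        finrank ℂ ((π z).eigenspace μ1) = 2) with h1 | h2
    · exact ⟨D, (π z).eigenspace μ1, hDinv, fun h v hv => hEinv μ1 h v hv,
        by rw [sup_comm]; exact hsupT, by omega, h1⟩
    · exact ⟨(π z).eigenspace μ1, D, fun h v hv => hEinv μ1 h v hv, hDinv,
        hsupT, h2, by omega⟩
  -- Step IV: split on the action of s on W
  by_cases hsW : ∀ v ∈ W, π s v = v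
  · exfalso
    have hsL : ∃ v ∈ L, π s v ≠ v := by
      by_contra hcon
      push_neg at hcon
      apply hs_ne
      apply hπinj
      rw [map_one]
      apply LinearMap.ext
      intro v
      have hvT : v ∈ W ⊔ L := by rw [hWL]; exact Submodule.mem_top
      obtain ⟨w, hw, l, hl, rfl⟩ := Submodule.mem_sup.mp hvT
      rw [Module.End.one_apply, map_add, hsW w hw, hcon l hl]
    haveI : Nontrivial L := finrank_pos_iff.mp (by rw [hL1]; omega)
    obtain ⟨x₀, hx₀⟩ := exists_ne (0 : L)
    have hv₀L : (x₀ : Fin 3 → ℂ) ∈ L := x₀.2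
    have hv₀ne : (x₀ : Fin 3 → ℂ) ≠ 0 := fun hcon => hx₀ (Subtype.ext hcon)
    have hspan : ∀ w ∈ L, ∃ c : ℂ, w = c • (x₀ : Fin 3 → ℂ) := by
      intro w hw
      obtain ⟨c, hc⟩ := (finrank_eq_one_iff_of_nonzero' x₀ hx₀).mp hL1 ⟨w, hw⟩
      exact ⟨c, (congrArg Subtype.val hc).symm⟩
    have hαex : ∀ h : G, ∃ c : ℂ, π h (x₀ : Fin 3 → ℂ) = c • (x₀ : Fin 3 → ℂ) := fun h =>
      hspan (π h (x₀ : Fin 3 → ℂ)) (hLinv h _ hv₀L)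
    choose α hα using hαex
    have hαmul : ∀ a b : G, α (a * b) = α a * α b := by
      intro a b
      have h1 : π (a * b) (x₀ : Fin 3 → ℂ) = (α a * α b) • (x₀ : Fin 3 → ℂ) := by
        rw [map_mul, Module.End.mul_apply, hα b, map_smul, hα a, smul_smul, mul_comm]
      exact smul_left_injective ℂ hv₀ne ((hα (a * b)).symm.trans h1)
    have hα1 : α 1 = 1 := by
      apply smul_left_injective ℂ hv₀ne
      show α 1 • (x₀ : Fin 3 → ℂ) = 1 • (x₀ : Fin 3 → ℂ)
      rw [← hα 1, map_one, Module.End.one_apply, one_smul]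
    have hcommL : ∀ a b : G, a * b * a⁻¹ * b⁻¹ ∈ actKer π L := by
      intro a b v hv
      obtain ⟨c, rfl⟩ := hspan v hv
      have hαc : α (a * b * a⁻¹ * b⁻¹) = 1 := by
        have ha' : α a * α a⁻¹ = 1 := by rw [← hαmul, mul_inv_cancel, hα1]
        have hb' : α b * α b⁻¹ = 1 := by rw [← hαmul, mul_inv_cancel, hα1]
        rw [hαmul, hαmul, hαmul]
        calc α a * α b * α a⁻¹ * α b⁻¹ = (α a * α a⁻¹) * (α b * α b⁻¹) := by ring
          _ = 1 := by rw [ha', hb', one_mul]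
      rw [map_smul, hα, hαc, one_smul]
    apply hna
    intro a b
    have hone : a * b * a⁻¹ * b⁻¹ = 1 := by
      by_contra hne
      have hKLne : actKer π L ≠ ⊥ := by
        intro hbotL
        exact hne (Subgroup.mem_bot.mp (hbotL ▸ hcommL a b))
      have hsK := hs_norm _ (actKer_normal π L hLinv) hKLne
      obtain ⟨v, hvL, hvne⟩ := hsL
      exact hvne (hsK v hvL)
    calc a * b = (a * b * a⁻¹ * b⁻¹) * (b * a) := by group
      _ = b * a := by rw [hone, one_mul]
  · push_neg at hsW
    have hKbot : actKer π W = ⊥ := by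
      by_contra hne
      obtain ⟨v, hvW, hvne⟩ := hsW
      exact hvne (hs_norm _ (actKer_normal π W hWinv) hne v hvW)
    let b : Basis (Fin 2) ℂ W := finBasisOfFinrankEq ℂ W hW2
    let Φ : G →* Module.End ℂ W :=
      { toFun := fun h => (π h).restrict (p := W) (q := W) (hWinv h)
        map_one' := by
          apply LinearMap.ext; intro v; apply Subtype.ext
          simp [LinearMap.restrict_apply]
        map_mul' := by
          intro a c
          apply LinearMap.ext; intro v; apply Subtype.ext
          simp [LinearMap.restrict_apply, map_mul, Module.End.mul_apply] }
    let φ0 : G →* Matrix (Fin 2) (Fin 2) ℂ :=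
      ((LinearMap.toMatrixAlgEquiv b).toRingEquiv.toRingHom.toMonoidHom).comp Φ
    refine ⟨φ0.toHomUnits, ?_⟩
    rw [injective_iff_map_eq_one]
    intro a ha
    have h1 : φ0 a = 1 := by
      rw [← MonoidHom.coe_toHomUnits φ0 a, ha, Units.val_one]
    have h2 : Φ a = 1 := by
      apply (LinearMap.toMatrixAlgEquiv b).injective
      rw [map_one]
      exact h1
    have hmem : a ∈ actKer π W := by
      intro v hv
      have h3 := congrArg (fun f : Module.End ℂ W => f ⟨v, hv⟩) h2
      have hval := congrArg Subtype.val h3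
      simpa [Φ, LinearMap.restrict_apply] using hval
    exact Subgroup.mem_bot.mp (hKbot ▸ hmem)


theorem stmt_15 (G : Type*) [Group G] [Finite G] (hp : IsPGroup 2 G)
    (hna : ¬ ∀ a b : G, a * b = b * a) (h : MinFaithful G 3) :
    ¬ IsCyclic (Subgroup.center G) := by
  intro hcyc
  obtain ⟨h3, _⟩ := h
  have hne : {n : ℕ | ∃ ρ : G →* GL (Fin n) ℂ, Function.Injective ρ}.Nonempty := by
    by_contra hcon
    rw [Set.not_nonempty_iff_eq_empty] at hcon
    rw [rdim, hcon, Nat.sInf_empty] at h3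
    exact absurd h3 (by omega)
  have h3mem : 3 ∈ {n : ℕ | ∃ ρ : G →* GL (Fin n) ℂ, Function.Injective ρ} := by
    have hmem := Nat.sInf_mem hne
    rwa [show sInf {n : ℕ | ∃ ρ : G →* GL (Fin n) ℂ, Function.Injective ρ} = rdim G from rfl,
      h3] at hmem
  obtain ⟨ρ, hρ⟩ := h3mem
  obtain ⟨φ, hφ⟩ := key hp hna hcyc ρ hρ
  have hle : rdim G ≤ 2 := Nat.sInf_le ⟨φ, hφ⟩
  omega
end
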